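/- arXiv:2211.05602 — 4 statements merged into one kernel-verified Lean document; each statement's English description precedes it below -/
import Mathlib

section
/- Let R be a commutative ring. Every element f of 1 + tR[[t]] admits a unique representation as a convergent infinite product f = ∏_{i≥1} (1 - aᵢ tⁱ) with aᵢ ∈ R. Moreover, f ∈ 1 + t^N R[[t]] if and only if aᵢ = 0 for all i < N. -/
open PowerSeries

section WittAux
open Finset

section Aux
variable {R : Type*} [CommRing R]

/-- partial product -/
noncomputable def wP (a : ℕ → R) (N : ℕ) : PowerSeries R :=
  ∏ i ∈ Finset.range (N + 1), (1 - PowerSeries.C (a i) * PowerSeries.X ^ i)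

lemma wP_succ (a : ℕ → R) (N : ℕ) :
    wP a (N + 1) = wP a N * (1 - PowerSeries.C (a (N + 1)) * PowerSeries.X ^ (N + 1)) := by
  rw [wP, wP, Finset.prod_range_succ]

lemma wP_zero (a : ℕ → R) (h0 : a 0 = 0) : wP a 0 = 1 := by
  simp [wP, h0]

lemma key_mul (Q : PowerSeries R) (c : R) {k m : ℕ} (h : m < k) :
    PowerSeries.coeff m (Q * (1 - PowerSeries.C c * PowerSeries.X ^ k)) =
      PowerSeries.coeff m Q := by
  rw [mul_sub, mul_one, map_sub]
  have : Q * (PowerSeries.C c * PowerSeries.X ^ k) = (Q * PowerSeries.C c) * PowerSeries.X ^ k := by ring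
  rw [this, PowerSeries.coeff_mul_X_pow', if_neg (by omega)]
  ring

lemma key_mul_self (Q : PowerSeries R) (c : R) (k : ℕ)
    (hconst : PowerSeries.constantCoeff Q = 1) :
    PowerSeries.coeff k (Q * (1 - PowerSeries.C c * PowerSeries.X ^ k)) =
      PowerSeries.coeff k Q - c := by
  rw [mul_sub, mul_one, map_sub]
  have : Q * (PowerSeries.C c * PowerSeries.X ^ k) = (Q * PowerSeries.C c) * PowerSeries.X ^ k := by ring
  rw [this, PowerSeries.coeff_mul_X_pow', if_pos le_rfl, Nat.sub_self,
    PowerSeries.coeff_zero_eq_constantCoeff, map_mul, hconst, PowerSeries.constantCoeff_C, one_mul]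

lemma wP_const (a : ℕ → R) (h0 : a 0 = 0) (N : ℕ) :
    PowerSeries.constantCoeff (wP a N) = 1 := by
  induction N with
  | zero => rw [wP_zero a h0]; simp
  | succ n ih =>
    rw [wP_succ, ← PowerSeries.coeff_zero_eq_constantCoeff] at *
    rw [key_mul _ _ (Nat.succ_pos n), ih]

lemma wP_coeff_stable (a : ℕ → R) {m N : ℕ} (h : m ≤ N) :
    PowerSeries.coeff m (wP a N) = PowerSeries.coeff m (wP a m) := by
  induction N with
  | zero => interval_cases m; rfl
  | succ n ih =>
    rcases Nat.lt_or_ge m (n + 1) with h' | h'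
    · rw [wP_succ, key_mul _ _ h', ih (by omega)]
    · have : m = n + 1 := by omega
      subst this; rfl

lemma wP_coeff_succ (a : ℕ → R) (h0 : a 0 = 0) (N : ℕ) :
    PowerSeries.coeff (N + 1) (wP a (N + 1)) =
      PowerSeries.coeff (N + 1) (wP a N) - a (N + 1) := by
  rw [wP_succ, key_mul_self _ _ _ (wP_const a h0 N)]

/-- recursive construction -/
noncomputable def wAux (f : PowerSeries R) : ℕ → R × PowerSeries R
  | 0 => (0, 1)
  | (N + 1) =>
      let P := (wAux f N).2
      let c := PowerSeries.coeff (N + 1) P - PowerSeries.coeff (N + 1) f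
      (c, P * (1 - PowerSeries.C c * PowerSeries.X ^ (N + 1)))

lemma wAux_prod (f : PowerSeries R) (N : ℕ) :
    (wAux f N).2 = wP (fun n => (wAux f n).1) N := by
  induction N with
  | zero => simp [wAux, wP_zero (fun n => (wAux f n).1) rfl]
  | succ n ih => rw [wP_succ, ← ih]; rfl

lemma wAux_spec (f : PowerSeries R) (N : ℕ) :
    (wAux f (N + 1)).1 =
      PowerSeries.coeff (N + 1) (wP (fun n => (wAux f n).1) N) -
        PowerSeries.coeff (N + 1) f := by
  rw [← wAux_prod]; rfl

/-- the derived formula for any representation -/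
lemma rep_formula (f : PowerSeries R) (a : ℕ → R) (h0 : a 0 = 0)
    (hrep : ∀ N : ℕ, ∀ m : ℕ, m ≤ N →
      PowerSeries.coeff m f = PowerSeries.coeff m (wP a N)) (N : ℕ) :
    a (N + 1) = PowerSeries.coeff (N + 1) (wP a N) - PowerSeries.coeff (N + 1) f := by
  have h := hrep (N + 1) (N + 1) le_rfl
  rw [wP_coeff_succ a h0 N] at h
  linear_combination h

end Aux

section Main
variable {R : Type*} [CommRing R]

lemma wP_eq_one (a : ℕ → R) (h0 : a 0 = 0) (N : ℕ)
    (hz : ∀ i : ℕ, 0 < i → i ≤ N → a i = 0) : wP a N = 1 := by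
  induction N with
  | zero => exact wP_zero a h0
  | succ n ih =>
    rw [wP_succ, ih (fun i hi hi' => hz i hi (by omega)), hz (n+1) (by omega) le_rfl]
    simp

lemma rep_exists (f : PowerSeries R) (hf : PowerSeries.constantCoeff f = 1) :
    let a := fun n => (wAux f n).1
    a 0 = 0 ∧ ∀ N : ℕ, ∀ m : ℕ, m ≤ N →
      PowerSeries.coeff m f = PowerSeries.coeff m (wP a N) := by
  intro a
  have h0 : a 0 = 0 := rfl
  refine ⟨h0, ?_⟩
  have key : ∀ N : ℕ, ∀ m : ℕ, m ≤ N →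
      PowerSeries.coeff m f = PowerSeries.coeff m (wP a N) := by
    intro N
    induction N with
    | zero =>
      intro m hm
      interval_cases m
      rw [wP_zero a h0]
      simp [hf]
    | succ n ih =>
      intro m hm
      rcases Nat.lt_or_ge m (n + 1) with h' | h'
      · rw [wP_coeff_stable a (show m ≤ n + 1 by omega), ← wP_coeff_stable a (show m ≤ n from by omega)]
        exact ih m (by omega)
      · have hm' : m = n + 1 := by omega
        subst hm'
        rw [wP_coeff_succ a h0 n]
        have hs : a (n + 1) = PowerSeries.coeff (n + 1) (wP a n) - PowerSeries.coeff (n + 1) f := wAux_spec f n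
        rw [hs]; ring
  exact key

lemma rep_unique (f : PowerSeries R) (a b : ℕ → R)
    (ha0 : a 0 = 0) (hb0 : b 0 = 0)
    (ha : ∀ N : ℕ, ∀ m : ℕ, m ≤ N →
      PowerSeries.coeff m f = PowerSeries.coeff m (wP a N))
    (hb : ∀ N : ℕ, ∀ m : ℕ, m ≤ N →
      PowerSeries.coeff m f = PowerSeries.coeff m (wP b N)) :
    a = b := by
  have key : ∀ n : ℕ, a n = b n := by
    intro n
    induction n using Nat.strong_induction_on with
    | _ n ih =>
      match n with
      | 0 => rw [ha0, hb0]
      | (N + 1) =>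
        have hP : wP a N = wP b N := by
          unfold wP
          exact Finset.prod_congr rfl (fun i hi => by
            rw [ih i (Finset.mem_range.mp hi)])
        rw [rep_formula f a ha0 ha N, rep_formula f b hb0 hb N, hP]
  funext n; exact key n

theorem witt_infinite_product_representation' {R : Type*} [CommRing R] (f : PowerSeries R)
    (hf : PowerSeries.constantCoeff f = 1) :
    (∃! a : ℕ → R, a 0 = 0 ∧ ∀ N : ℕ, ∀ m : ℕ, m ≤ N →
        PowerSeries.coeff m f =
          PowerSeries.coeff m
            (∏ i ∈ Finset.range (N + 1), (1 - PowerSeries.C (a i) * PowerSeries.X ^ i))) ∧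
    (∀ a : ℕ → R,
      (a 0 = 0 ∧ ∀ N : ℕ, ∀ m : ℕ, m ≤ N →
        PowerSeries.coeff m f =
          PowerSeries.coeff m
            (∏ i ∈ Finset.range (N + 1), (1 - PowerSeries.C (a i) * PowerSeries.X ^ i))) →
      ∀ N : ℕ,
        ((∀ m : ℕ, 0 < m → m < N → PowerSeries.coeff m f = 0) ↔
          (∀ i : ℕ, 0 < i → i < N → a i = 0))) := by
  constructor
  · obtain ⟨h0, hrep⟩ := rep_exists f hf
    refine ⟨fun n => (wAux f n).1, ⟨h0, hrep⟩, ?_⟩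
    intro b ⟨hb0, hbrep⟩
    exact rep_unique f b _ hb0 h0 hbrep hrep
  · rintro a ⟨h0, hrep⟩ N
    constructor
    · intro hcoeff i
      induction i using Nat.strong_induction_on with
      | _ i ih =>
        intro hi hiN
        match i, hi with
        | (k + 1), _ =>
          have hform := rep_formula f a h0 hrep k
          have hP1 : wP a k = 1 :=
            wP_eq_one a h0 k (fun j hj hjk => ih j (by omega) hj (by omega))
          rw [hform, hP1, hcoeff (k+1) (by omega) hiN]
          simp [PowerSeries.coeff_one]
    · intro hz m hm hmN
      have h1 : PowerSeries.coeff m f = PowerSeries.coeff m (wP a m) :=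
        hrep m m le_rfl
      rw [wP_eq_one a h0 m (fun j hj hjm => hz j hj (by omega))] at h1
      rw [h1]
      simp [PowerSeries.coeff_one, hm.ne']
end Main

end WittAux

/-- Every power series `f ∈ 1 + tR[[t]]` admits a unique representation as a
(t-adically convergent) infinite product `f = ∏_{i ≥ 1} (1 - aᵢ tⁱ)`: there is a unique
family `a : ℕ → R` (with the irrelevant index `a 0` normalized to `0`) such that for each `N`
the coefficients of `f` up to degree `N` agree with those of the finite partial product
`∏_{i ≤ N} (1 - aᵢ tⁱ)`.  Moreover `f ∈ 1 + t^N R[[t]]` iff `aᵢ = 0` for all `0 < i < N`. -/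
theorem witt_infinite_product_representation {R : Type*} [CommRing R] (f : PowerSeries R)
    (hf : PowerSeries.constantCoeff f = 1) :
    (∃! a : ℕ → R, a 0 = 0 ∧ ∀ N : ℕ, ∀ m : ℕ, m ≤ N →
        PowerSeries.coeff m f =
          PowerSeries.coeff m
            (∏ i ∈ Finset.range (N + 1), (1 - PowerSeries.C (a i) * PowerSeries.X ^ i))) ∧
    (∀ a : ℕ → R,
      (a 0 = 0 ∧ ∀ N : ℕ, ∀ m : ℕ, m ≤ N →
        PowerSeries.coeff m f =
          PowerSeries.coeff m
            (∏ i ∈ Finset.range (N + 1), (1 - PowerSeries.C (a i) * PowerSeries.X ^ i))) →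
      ∀ N : ℕ,
        ((∀ m : ℕ, 0 < m → m < N → PowerSeries.coeff m f = 0) ↔
          (∀ i : ℕ, 0 < i → i < N → a i = 0))) :=
  witt_infinite_product_representation' f hf
end

section
/- Let R be a commutative ring and M a nilpotent square matrix over R. Then every coefficient of det(1 - tM) other than the constant coefficient 1 is nilpotent in R. Consequently det(1 - tM) is a unit in the polynomial ring R[t]. -/
/-- if `M` is a nilpotent square matrix over a commutative ring `R`, then
every coefficient of `det(1 - tM)` other than the constant coefficient `1` is nilpotent
in `R`; consequently `det(1 - tM)` is a unit of the polynomial ring `R[t]`. -/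
theorem charpoly_nilpotent_unit {R : Type*} [CommRing R] {m : ℕ}
    (M : Matrix (Fin m) (Fin m) R) (hM : IsNilpotent M) :
    (∀ i : ℕ, i ≠ 0 →
      IsNilpotent
        (Polynomial.coeff
          (((1 : Matrix (Fin m) (Fin m) (Polynomial R)) -
              (Polynomial.X : Polynomial R) • M.map Polynomial.C).det) i)) ∧
    IsUnit (((1 : Matrix (Fin m) (Fin m) (Polynomial R)) -
        (Polynomial.X : Polynomial R) • M.map Polynomial.C).det) := by
  have hN : IsNilpotent ((Polynomial.X : Polynomial R) • M.map Polynomial.C) := by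
    exact (hM.map (Polynomial.C.mapMatrix)).smul _
  have hU : IsUnit (((1 : Matrix (Fin m) (Fin m) (Polynomial R)) -
      (Polynomial.X : Polynomial R) • M.map Polynomial.C).det) := by
    rw [← Matrix.isUnit_iff_isUnit_det]
    exact hN.isUnit_one_sub
  exact ⟨fun i hi => ((Polynomial.isUnit_iff_coeff_isUnit_isNilpotent.mp hU).2 i hi), hU⟩
end

section
/- Let R be a commutative ring, M a square matrix over R. Then the negative logarithmic derivative of the characteristic power series computes traces of powers: -t · d/dt log det(1 - tM) = ∑_{n≥1} tr(M^n) t^n in R[[t]], equivalently t·(d/dt det(1 - tM)) = -det(1 - tM) · ∑_{n≥1} tr(M^n) t^n. -/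
open Polynomial Matrix Finset

/-- Derivative of a finite product of polynomials. -/
private lemma derivative_finset_prod {R : Type*} [CommRing R] {ι : Type*} [DecidableEq ι]
    (s : Finset ι) (f : ι → R[X]) :
    Polynomial.derivative (∏ i ∈ s, f i) =
      ∑ i ∈ s, (∏ j ∈ s.erase i, f j) * Polynomial.derivative (f i) := by
  rw [Finset.prod_eq_multiset_prod, Polynomial.derivative_prod, Finset.sum_eq_multiset_sum]
  exact congrArg Multiset.sum (Multiset.map_congr rfl fun i hi => by
    rw [← Finset.erase_val, Finset.prod_eq_multiset_prod])

/-- Jacobi's formula for polynomial matrices. -/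
private lemma jacobi_formula {R : Type*} [CommRing R] {n : Type*} [Fintype n] [DecidableEq n]
    (A : Matrix n n R[X]) :
    Polynomial.derivative A.det =
      Matrix.trace (A.adjugate * A.map (⇑Polynomial.derivative)) := by
  have hcol : ∀ j, (A.adjugate * A.map (⇑Polynomial.derivative)) j j =
      (A.updateCol j fun k => Polynomial.derivative (A k j)).det := by
    intro j
    rw [← Matrix.cramer_apply, Matrix.cramer_eq_adjugate_mulVec]
    simp [Matrix.mul_apply, Matrix.mulVec, dotProduct, Matrix.map_apply]
  rw [Matrix.trace]
  simp only [Matrix.diag_apply, hcol]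
  rw [Matrix.det_apply']
  rw [map_sum]
  have : ∀ σ : Equiv.Perm n,
      Polynomial.derivative (((Equiv.Perm.sign σ : ℤ) : R[X]) * ∏ i, A (σ i) i) =
        ∑ j, ((Equiv.Perm.sign σ : ℤ) : R[X]) *
          ((∏ i ∈ Finset.univ.erase j, A (σ i) i) * Polynomial.derivative (A (σ j) j)) := by
    intro σ
    rw [Polynomial.derivative_mul, Polynomial.derivative_intCast, zero_mul, zero_add,
      derivative_finset_prod, Finset.mul_sum]
  rw [Finset.sum_congr rfl fun σ _ => this σ, Finset.sum_comm]
  refine Finset.sum_congr rfl fun j _ => ?_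
  rw [Matrix.det_apply']
  refine Finset.sum_congr rfl fun σ _ => ?_
  have hprod : (∏ i, (A.updateCol j fun k => Polynomial.derivative (A k j)) (σ i) i) =
      Polynomial.derivative (A (σ j) j) * ∏ i ∈ Finset.univ.erase j, A (σ i) i := by
    rw [← Finset.mul_prod_erase _ _ (Finset.mem_univ j)]
    congr 1
    · rw [Matrix.updateCol_apply, if_pos rfl]
    · exact Finset.prod_congr rfl fun i hi => by
        rw [Matrix.updateCol_apply, if_neg (Finset.mem_erase.mp hi).1]
  rw [hprod]; ring

section Geom

variable {R : Type*} [CommRing R] {m : ℕ} (M : Matrix (Fin m) (Fin m) R)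

/-- The geometric series `∑ tⁿ Mⁿ`, inverse of `1 - tM` over `R⟦t⟧`. -/
private noncomputable def geomN : Matrix (Fin m) (Fin m) (PowerSeries R) :=
  Matrix.of fun i j => PowerSeries.mk fun n => (M ^ n) i j


private lemma geomN_mul_mapC :
    geomN M * M.map (PowerSeries.C) =
      Matrix.of fun i j => PowerSeries.mk fun n => (M ^ (n + 1)) i j := by
  ext i j n
  simp only [Matrix.mul_apply, map_sum, PowerSeries.coeff_mk, geomN, Matrix.map_apply,
    Matrix.of_apply]
  have : ∀ k, (PowerSeries.coeff n)
      (PowerSeries.mk (fun n => (M ^ n) i k) * PowerSeries.C (M k j)) =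
      (M ^ n) i k * M k j := by
    intro k
    rw [PowerSeries.coeff_mul_C, PowerSeries.coeff_mk]
  rw [Finset.sum_congr rfl fun k _ => this k, pow_succ, Matrix.mul_apply]

private lemma geomN_mul_A :
    geomN M * ((1 : Matrix (Fin m) (Fin m) (PowerSeries R)) -
      (PowerSeries.X : PowerSeries R) • M.map (PowerSeries.C)) = 1 := by
  rw [Matrix.mul_sub, Matrix.mul_one, Matrix.mul_smul]
  have hmul : ∀ i j, (geomN M * M.map (PowerSeries.C)) i j =
      PowerSeries.mk fun n => (M ^ (n + 1)) i j := by
    intro i j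
    apply PowerSeries.ext
    intro n
    simp only [Matrix.mul_apply, map_sum, PowerSeries.coeff_mk, geomN, Matrix.map_apply,
      Matrix.of_apply]
    have : ∀ k, (PowerSeries.coeff n)
        (PowerSeries.mk (fun n => (M ^ n) i k) * PowerSeries.C (M k j)) =
        (M ^ n) i k * M k j := by
      intro k
      rw [PowerSeries.coeff_mul_C, PowerSeries.coeff_mk]
    rw [Finset.sum_congr rfl fun k _ => this k, pow_succ, Matrix.mul_apply]
  ext i j n
  simp only [Matrix.sub_apply, Matrix.smul_apply, smul_eq_mul, Matrix.one_apply]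
  rw [hmul, map_sub]
  cases n with
  | zero =>
    simp only [PowerSeries.coeff_zero_X_mul, sub_zero, geomN, Matrix.of_apply,
      PowerSeries.coeff_mk, pow_zero]
    split_ifs with h <;> simp [Matrix.one_apply, h]
  | succ n =>
    simp only [PowerSeries.coeff_succ_X_mul, geomN, Matrix.of_apply, PowerSeries.coeff_mk,
      sub_self]
    split_ifs with h <;> simp
private lemma A_mul_geomN :
    ((1 : Matrix (Fin m) (Fin m) (PowerSeries R)) -
      (PowerSeries.X : PowerSeries R) • M.map (PowerSeries.C)) * geomN M = 1 := by
  rw [Matrix.sub_mul, Matrix.one_mul, Matrix.smul_mul]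
  have hmul : ∀ i j, (M.map (PowerSeries.C) * geomN M) i j =
      PowerSeries.mk fun n => (M ^ (n + 1)) i j := by
    intro i j
    apply PowerSeries.ext
    intro n
    simp only [Matrix.mul_apply, map_sum, PowerSeries.coeff_mk, geomN, Matrix.map_apply,
      Matrix.of_apply]
    have : ∀ k, (PowerSeries.coeff n)
        (PowerSeries.C (M i k) * PowerSeries.mk (fun n => (M ^ n) k j)) =
        M i k * (M ^ n) k j := by
      intro k
      rw [PowerSeries.coeff_C_mul, PowerSeries.coeff_mk]
    rw [Finset.sum_congr rfl fun k _ => this k, pow_succ', Matrix.mul_apply]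
  ext i j n
  simp only [Matrix.sub_apply, Matrix.smul_apply, smul_eq_mul, Matrix.one_apply]
  rw [hmul, map_sub]
  cases n with
  | zero =>
    simp only [PowerSeries.coeff_zero_X_mul, sub_zero, geomN, Matrix.of_apply,
      PowerSeries.coeff_mk, pow_zero]
    split_ifs with h <;> simp [Matrix.one_apply, h]
  | succ n =>
    simp only [PowerSeries.coeff_succ_X_mul, geomN, Matrix.of_apply, PowerSeries.coeff_mk,
      sub_self]
    split_ifs with h <;> simp

end Geom

/-- the negative logarithmic derivative of the characteristic power series
`f = det(1 - tM)` computes traces of powers: `-t·f'/f = ∑_{n≥1} tr(Mⁿ)tⁿ`, stated without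
division as `t·f' + f·(∑_{n≥1} tr(Mⁿ)tⁿ) = 0` in `R[[t]]`. -/
theorem charpoly_log_derivative_trace {R : Type*} [CommRing R] {m : ℕ}
    (M : Matrix (Fin m) (Fin m) R) :
    (PowerSeries.X : PowerSeries R) *
        PowerSeries.derivative R
          (Polynomial.coeToPowerSeries.ringHom
            (((1 : Matrix (Fin m) (Fin m) (Polynomial R)) -
                (Polynomial.X : Polynomial R) • M.map Polynomial.C).det)) +
      (Polynomial.coeToPowerSeries.ringHom
          (((1 : Matrix (Fin m) (Fin m) (Polynomial R)) -
              (Polynomial.X : Polynomial R) • M.map Polynomial.C).det)) *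
        PowerSeries.mk (fun n => if n = 0 then 0 else Matrix.trace (M ^ n)) = 0 := by
  classical
  set φ : R[X] →+* PowerSeries R := Polynomial.coeToPowerSeries.ringHom with hφ
  set Ap : Matrix (Fin m) (Fin m) R[X] :=
    1 - (Polynomial.X : R[X]) • M.map Polynomial.C with hApdef
  set As : Matrix (Fin m) (Fin m) (PowerSeries R) :=
    1 - (PowerSeries.X : PowerSeries R) • M.map (PowerSeries.C) with hAsdef
  have hmapA : Ap.map ⇑φ = As := by
    ext i j : 2
    simp [hφ, hApdef, hAsdef, Matrix.map_apply, Matrix.sub_apply, Matrix.smul_apply,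
      Matrix.one_apply, smul_eq_mul, apply_ite ⇑φ,
      Polynomial.coeToPowerSeries.ringHom_apply, Polynomial.coe_X, Polynomial.coe_C]
    split_ifs with h <;> simp [mul_comm, Polynomial.coeff_one]
  have hdet : φ Ap.det = As.det := by rw [RingHom.map_det, RingHom.mapMatrix_apply, hmapA]
  have hAd : Ap.map ⇑Polynomial.derivative = -(M.map Polynomial.C) := by
    ext i j : 2
    simp [hApdef, Matrix.map_apply, Matrix.sub_apply, Matrix.smul_apply, Matrix.one_apply,
      smul_eq_mul, apply_ite ⇑Polynomial.derivative, Polynomial.derivative_mul]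
  have hjac : Polynomial.derivative Ap.det =
      -Matrix.trace (Ap.adjugate * M.map Polynomial.C) := by
    rw [jacobi_formula, hAd, Matrix.mul_neg, Matrix.trace_neg]
  have hadjS : As.adjugate = As.det • geomN M := by
    calc As.adjugate = As.adjugate * (As * geomN M) := by rw [A_mul_geomN, mul_one]
      _ = (As.adjugate * As) * geomN M := by rw [mul_assoc]
      _ = (As.det • 1) * geomN M := by rw [Matrix.adjugate_mul]
      _ = As.det • geomN M := by rw [Matrix.smul_mul, one_mul]
  have hφtrace : φ (Matrix.trace (Ap.adjugate * M.map Polynomial.C)) =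
      Matrix.trace ((Ap.adjugate * M.map Polynomial.C).map ⇑φ) := by
    simp [Matrix.trace, Matrix.diag, map_sum, Matrix.map_apply]
  have hmm : (Ap.adjugate * M.map Polynomial.C).map ⇑φ =
      As.adjugate * M.map (PowerSeries.C) := by
    rw [Matrix.map_mul]
    congr 1
    · have h := RingHom.map_adjugate φ Ap
      simp only [RingHom.mapMatrix_apply] at h
      rw [h, hmapA]
    · ext i j : 2
      simp [hφ, Matrix.map_apply, Polynomial.coeToPowerSeries.ringHom_apply, Polynomial.coe_C]
  have htr : Matrix.trace (geomN M * M.map (PowerSeries.C)) =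
      PowerSeries.mk fun n => Matrix.trace (M ^ (n + 1)) := by
    rw [geomN_mul_mapC]
    apply PowerSeries.ext
    intro n
    simp [Matrix.trace, Matrix.diag, map_sum, PowerSeries.coeff_mk]
  have key : (↑(Matrix.trace (Ap.adjugate * M.map Polynomial.C)) : PowerSeries R) =
      As.det * PowerSeries.mk fun n => Matrix.trace (M ^ (n + 1)) := by
    rw [← Polynomial.coeToPowerSeries.ringHom_apply, ← hφ, hφtrace, hmm, hadjS,
      Matrix.smul_mul, Matrix.trace_smul, htr, smul_eq_mul]
  have hS : PowerSeries.mk (fun n => if n = 0 then 0 else Matrix.trace (M ^ n)) =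
      PowerSeries.X * PowerSeries.mk fun n => Matrix.trace (M ^ (n + 1)) := by
    apply PowerSeries.ext
    intro n
    cases n with
    | zero => simp
    | succ n => simp [PowerSeries.coeff_succ_X_mul]
  have hdet' : ((Ap.det : R[X]) : PowerSeries R) = As.det := by
    rw [← Polynomial.coeToPowerSeries.ringHom_apply, ← hφ, hdet]
  have hgoalcast : φ Ap.det = ((Ap.det : R[X]) : PowerSeries R) :=
    Polynomial.coeToPowerSeries.ringHom_apply
  rw [hgoalcast, PowerSeries.derivative_coe, hjac, Polynomial.coe_neg, key, hS, hdet']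
  ring
end

section
/- Let R be a commutative Z[1/l]-algebra for an integer l ≥ 2, and let A be an abelian group equipped with a continuous W(R)-module structure (i.e. every element of A is annihilated by the ideal 1 + t^N R[[t]] for some N). Then multiplication by the integer l (acting via the unit map Z → W(R)) is invertible on A. -/
open PowerSeries

/-- `f` lies in `1 + t^N R[[t]]`: constant coefficient `1` and vanishing coefficients in
degrees `0 < m < N`.  These subsets are the ideals of the big Witt ring `W(R)` defining
its natural topology. -/
def CongOne {R : Type*} [CommRing R] (N : ℕ) (f : PowerSeries R) : Prop :=
  PowerSeries.constantCoeff f = 1 ∧ ∀ m : ℕ, 0 < m → m < N → PowerSeries.coeff m f = 0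


/-- Newton iteration polynomials approximating an `l`-th root of `1 - X`. -/
noncomputable def wpoly (R : Type*) [CommRing R] (c : R) (l : ℕ) : ℕ → Polynomial R
  | 0 => 1
  | n + 1 =>
      wpoly R c l n +
        Polynomial.C (c * ((if n + 1 = 1 then (-1 : R) else 0) -
            ((wpoly R c l n) ^ l).coeff (n + 1))) * Polynomial.X ^ (n + 1)

theorem wpoly_coeff_zero (R : Type*) [CommRing R] (c : R) (l : ℕ) (n : ℕ) :
    (wpoly R c l n).coeff 0 = 1 := by
  induction n with
  | zero => simp [wpoly]
  | succ n ih => simp [wpoly, ih]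

theorem wpoly_coeff_stable (R : Type*) [CommRing R] (c : R) (l : ℕ) {k n m : ℕ}
    (hk : k ≤ n) (hnm : n ≤ m) : (wpoly R c l m).coeff k = (wpoly R c l n).coeff k := by
  induction m with
  | zero => obtain rfl : n = 0 := by omega
            rfl
  | succ m ih =>
    rcases Nat.lt_or_ge n (m+1) with h | h
    · have hx : (Polynomial.X ^ (m+1) : Polynomial R).coeff k = 0 := by
        rw [Polynomial.coeff_X_pow]
        exact if_neg (by omega)
      rw [wpoly, Polynomial.coeff_add, Polynomial.coeff_C_mul, hx, mul_zero, add_zero,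
        ih (by omega)]
    · obtain rfl : n = m + 1 := by omega
      rfl

theorem wpoly_key (R : Type*) [CommRing R] (c : R) (l : ℕ) (hl : 1 ≤ l)
    (hcl : (l : R) * c = 1) (n : ℕ) :
    ((wpoly R c l (n+1)) ^ l).coeff (n + 1) = (if n + 1 = 1 then (-1 : R) else 0) := by
  set p := wpoly R c l n with hp
  set a := c * ((if n + 1 = 1 then (-1 : R) else 0) - (p ^ l).coeff (n + 1)) with ha
  have hstep : wpoly R c l (n+1) = p + Polynomial.C a * Polynomial.X ^ (n+1) := rfl
  rw [hstep, add_pow]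
  rw [Polynomial.finset_sum_coeff]
  have hc0 : p.coeff 0 = 1 := wpoly_coeff_zero R c l n
  have hconst : ∀ j : ℕ, (p ^ j).coeff 0 = 1 := by
    intro j
    induction j with
    | zero => simp
    | succ j ih => rw [pow_succ, Polynomial.mul_coeff_zero, ih, hc0, mul_one]
  have hterm : ∀ b ∈ Finset.range (l + 1),
      (p ^ b * (Polynomial.C a * Polynomial.X ^ (n+1)) ^ (l - b) *
          (l.choose b : Polynomial R)).coeff (n+1)
        = (if b = l then (p ^ l).coeff (n+1) else 0) +
          (if b = l - 1 then (l : R) * a else 0) := by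
    intro b hb
    rcases eq_or_ne b l with rfl | hbl
    · rw [if_pos rfl, if_neg (by omega)]
      simp
    rcases eq_or_ne b (l - 1) with rfl | hbl1
    · rw [if_neg hbl, if_pos rfl]
      have hll : l - (l - 1) = 1 := by omega
      have h2 : p ^ (l-1) * (Polynomial.C a * Polynomial.X ^ (n + 1)) ^ (l - (l-1)) *
            (l.choose (l-1) : Polynomial R)
          = Polynomial.C ((l.choose (l-1) : R)) *
              (Polynomial.C a * (p ^ (l-1) * Polynomial.X ^ (n+1))) := by
        rw [hll, ← Polynomial.C_eq_natCast]
        ring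
      rw [h2, Polynomial.coeff_C_mul, Polynomial.coeff_C_mul,
        Polynomial.coeff_mul_X_pow', if_pos le_rfl]
      have hch : l.choose (l - 1) = l := by
        have := Nat.choose_symm (n := l) (k := 1) hl
        simpa [Nat.choose_one_right] using this
      simp [hch, hconst]
    · rw [if_neg hbl, if_neg hbl1]
      simp only [add_zero]
      have h2 : 2 ≤ l - b := by
        simp only [Finset.mem_range] at hb
        omega
      have hdvd : Polynomial.X ^ (n + 2) ∣
          p ^ b * (Polynomial.C a * Polynomial.X ^ (n+1)) ^ (l - b) *
            (l.choose b : Polynomial R) := by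
        apply Dvd.dvd.mul_right
        apply Dvd.dvd.mul_left
        rw [mul_pow, ← pow_mul]
        exact Dvd.dvd.mul_left (pow_dvd_pow _ (by nlinarith)) _
      obtain ⟨q, hq⟩ := hdvd
      rw [hq, mul_comm, Polynomial.coeff_mul_X_pow', if_neg (by omega)]
  rw [Finset.sum_congr rfl hterm, Finset.sum_add_distrib,
    Finset.sum_ite_eq' (Finset.range (l+1)) l (fun _ => (p ^ l).coeff (n+1)),
    Finset.sum_ite_eq' (Finset.range (l+1)) (l-1) (fun _ => (l : R) * a),
    if_pos (by simp), if_pos (by simp only [Finset.mem_range]; omega)]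
  rw [ha, ← mul_assoc, hcl, one_mul]
  ring

/-- The `l`-th root of `1 - X` as a power series, built from the `wpoly` approximations. -/
noncomputable def wroot (R : Type*) [CommRing R] (c : R) (l : ℕ) : PowerSeries R :=
  PowerSeries.mk fun n => (wpoly R c l n).coeff n

theorem wroot_constantCoeff (R : Type*) [CommRing R] (c : R) (l : ℕ) :
    PowerSeries.constantCoeff (wroot R c l) = 1 := by
  have : PowerSeries.constantCoeff (wroot R c l) = (wpoly R c l 0).coeff 0 := by
    simp [wroot, ← PowerSeries.coeff_zero_eq_constantCoeff_apply]
  rw [this, wpoly_coeff_zero]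

theorem wroot_pow (R : Type*) [CommRing R] (c : R) (l : ℕ) (hl : 1 ≤ l)
    (hcl : (l : R) * c = 1) :
    (wroot R c l) ^ l = 1 - PowerSeries.X := by
  ext n
  have hdvd : (PowerSeries.X : PowerSeries R) ^ (n + 1) ∣
      wroot R c l - (wpoly R c l n : Polynomial R) := by
    rw [PowerSeries.X_pow_dvd_iff]
    intro m hm
    rw [map_sub]
    rw [Polynomial.coeff_coe]
    have : PowerSeries.coeff m (wroot R c l) = (wpoly R c l m).coeff m := by
      simp [wroot]
    rw [this, wpoly_coeff_stable R c l (le_refl m) (by omega : m ≤ n), sub_self]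
  have hdvd2 : (PowerSeries.X : PowerSeries R) ^ (n + 1) ∣
      (wroot R c l) ^ l - ((wpoly R c l n : Polynomial R) : PowerSeries R) ^ l :=
    dvd_trans hdvd (sub_dvd_pow_sub_pow _ _ l)
  have hco : PowerSeries.coeff n ((wroot R c l) ^ l)
      = PowerSeries.coeff n (((wpoly R c l n : Polynomial R) : PowerSeries R) ^ l) := by
    rw [PowerSeries.X_pow_dvd_iff] at hdvd2
    have := hdvd2 n (by omega)
    rw [map_sub] at this
    exact sub_eq_zero.mp this
  rw [hco, ← Polynomial.coe_pow, Polynomial.coeff_coe]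
  rcases n with _ | n
  · have : ((wpoly R c l 0) ^ l).coeff 0 = 1 := by
      have h0 : (wpoly R c l 0) = 1 := rfl
      simp [h0]
    simp [this]
  · rw [wpoly_key R c l hl hcl n]
    rcases eq_or_ne (n + 1) 1 with h1 | h1
    · rw [if_pos h1, h1]
      simp
    · rw [if_neg h1]
      rw [map_sub, PowerSeries.coeff_one, if_neg (by omega), PowerSeries.coeff_X,
        if_neg (by omega)]
      ring

/-- let `R` be a commutative `ℤ[1/l]`-algebra (`l ≥ 2` invertible in `R`), and
let `W` be the ring of big Witt vectors of `R`: a commutative ring identified with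
`1 + tR[[t]]` in such a way that Witt addition is multiplication of power series, the unit
is `1 - t`, Witt multiplication satisfies `(1-at)·(1-bt) = 1-abt`, and the subsets
`1 + t^N R[[t]]` are ideals.  If `A` is an abelian group with a continuous `W`-module
structure (every element of `A` is annihilated by the ideal `1 + t^N R[[t]]` for some `N`),
then multiplication by the integer `l` (acting via the unit map `ℤ → W`) is invertible
on `A`. -/
theorem mul_int_invertible_on_continuous_witt_module (R : Type*) [CommRing R]
    (l : ℕ) (hl : 2 ≤ l) (hR : IsUnit (l : R))
    (W : Type*) [CommRing W]
    (e : W ≃ {f : PowerSeries R // PowerSeries.constantCoeff f = 1})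
    (hadd : ∀ v w : W, (e (v + w)).1 = (e v).1 * (e w).1)
    (hone : (e 1).1 = 1 - PowerSeries.X)
    (hmulgen : ∀ a b : R,
      (e (e.symm ⟨1 - PowerSeries.C a * PowerSeries.X, by simp⟩ *
          e.symm ⟨1 - PowerSeries.C b * PowerSeries.X, by simp⟩)).1 =
        1 - PowerSeries.C (a * b) * PowerSeries.X)
    (hideal : ∀ (N : ℕ) (v w : W), CongOne N (e w).1 → CongOne N (e (v * w)).1)
    (A : Type*) [AddCommGroup A] [Module W A]
    (hcont : ∀ a : A, ∃ N : ℕ, ∀ w : W, CongOne N (e w).1 → w • a = 0) :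
    Function.Bijective (fun a : A => (l : W) • a) := by
  obtain ⟨c, hcl⟩ := hR.exists_right_inv
  -- the `l`-th root of `1 - X` gives an inverse of `(l : W)` in `W`
  set g : PowerSeries R := wroot R c l with hg
  have hg1 : PowerSeries.constantCoeff g = 1 := wroot_constantCoeff R c l
  have hgl : g ^ l = 1 - PowerSeries.X := wroot_pow R c l (by omega) hcl
  set u : W := e.symm ⟨g, hg1⟩ with hu
  have hpow : ∀ (n : ℕ) (w : W), (e (n • w)).1 = (e w).1 ^ n := by
    intro n w
    induction n with
    | zero =>
      -- (e 0).1 = 1 since e 0 is idempotent and a unit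
      have h0 : (e (0 : W)).1 = (e (0 : W)).1 * (e (0 : W)).1 := by
        have := hadd 0 0
        rwa [add_zero] at this
      have hunit : IsUnit (e (0 : W)).1 :=
        PowerSeries.isUnit_iff_constantCoeff.mpr (by rw [(e (0 : W)).2]; exact isUnit_one)
      have : (e (0 : W)).1 * 1 = (e (0 : W)).1 * (e (0 : W)).1 := by rw [mul_one, ← h0]
      have h1 : (1 : PowerSeries R) = (e (0 : W)).1 := hunit.mul_left_cancel this
      simp [zero_smul, ← h1]
    | succ n ih =>
      rw [succ_nsmul, hadd, ih, pow_succ]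
  have hlu : (l : W) * u = 1 := by
    apply e.injective
    apply Subtype.ext
    have h3 : (l : W) * u = (l : ℕ) • u := by
      rw [nsmul_eq_mul]
    rw [h3, hpow, hu, Equiv.apply_symm_apply, hone, ← hgl]
  constructor
  · intro x y hxy
    simp only at hxy
    have := congrArg (fun a : A => u • a) hxy
    simpa [smul_smul, mul_comm u ((l : W)), hlu] using this
  · intro b
    refine ⟨u • b, ?_⟩
    simp [smul_smul, hlu]
end
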